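/- arXiv:2202.06289 — 6 statements merged into one kernel-verified Lean document; each statement's English description precedes it below -/
import Mathlib

section
/- Let h : X → ℝ be continuous on a compact metric space X with both {h > 0} and {h ≤ 0} nonempty. Then there exist positive non-decreasing functions δ₁, δ₂ : (0,1) → ℝ with δ₁(r) → 0 and δ₂(r) → 0 as r → 0, such that for all r ∈ (0,1): ({h > 0})_{-δ₁(r)} ⊆ {h ≥ r} ⊆ ({h > 0})_{-δ₂(r)}. -/
open Metric Set MeasureTheory Filter Topology

noncomputable def minusSet {X : Type*} [MetricSpace X] (A : Set X) (δ : ℝ) : Set X :=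
  {x | ENNReal.ofReal δ ≤ EMetric.infEdist x Aᶜ}

/-- Sandwiching super-level sets of a continuous function between inner δ-sets of `{h > 0}`. -/
theorem levelSet_sandwich {X : Type*} [MetricSpace X] [CompactSpace X]
    (h : X → ℝ) (hcont : Continuous h)
    (hpos : {x | 0 < h x}.Nonempty) (hnonpos : {x | h x ≤ 0}.Nonempty) :
    ∃ δ₁ δ₂ : ℝ → ℝ,
      (∀ r ∈ Set.Ioo (0:ℝ) 1, 0 < δ₁ r) ∧ (∀ r ∈ Set.Ioo (0:ℝ) 1, 0 < δ₂ r) ∧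
      MonotoneOn δ₁ (Set.Ioo (0:ℝ) 1) ∧ MonotoneOn δ₂ (Set.Ioo (0:ℝ) 1) ∧
      Tendsto δ₁ (nhdsWithin 0 (Set.Ioi 0)) (nhds 0) ∧
      Tendsto δ₂ (nhdsWithin 0 (Set.Ioi 0)) (nhds 0) ∧
      ∀ r ∈ Set.Ioo (0:ℝ) 1,
        minusSet {x | 0 < h x} (δ₁ r) ⊆ {x | r ≤ h x} ∧
        {x | r ≤ h x} ⊆ minusSet {x | 0 < h x} (δ₂ r) := by
  set A : Set X := {x | 0 < h x} with hA
  have hAc : Aᶜ = {x | h x ≤ 0} := by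
    ext x; simp [hA, not_lt]
  have hAcne : Aᶜ.Nonempty := by rw [hAc]; exact hnonpos
  have hAcclosed : IsClosed Aᶜ := by
    rw [hAc]; exact isClosed_le hcont continuous_const
  set g : X → ℝ := fun x => Metric.infDist x Aᶜ with hg
  have hgcont : Continuous g := Metric.continuous_infDist_pt _
  have hgnonneg : ∀ x, 0 ≤ g x := fun x => Metric.infDist_nonneg
  -- g x = 0 on Aᶜ
  have hgzero : ∀ x ∈ Aᶜ, g x = 0 := fun x hx => Metric.infDist_zero_of_mem hx
  -- if g x > 0 then h x > 0
  have hgpos_h : ∀ x, 0 < g x → 0 < h x := by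
    intro x hx
    by_contra hcon
    push_neg at hcon
    have : x ∈ Aᶜ := by rw [hAc]; exact hcon
    simp [hgzero x this] at hx
  -- bddAbove of images of g
  have hbdd : ∀ s : Set X, BddAbove (g '' s) :=
    fun s => ((isCompact_range hgcont).bddAbove).mono (image_subset_range _ _)
  -- level sets are closed/compact
  have hKclosed : ∀ r : ℝ, IsClosed {x | r ≤ h x} :=
    fun r => isClosed_le continuous_const hcont
  have hLclosed : ∀ r : ℝ, IsClosed {x | h x ≤ r} :=
    fun r => isClosed_le hcont continuous_const
  have hLne : ∀ r : ℝ, 0 ≤ r → {x | h x ≤ r}.Nonempty := by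
    intro r hr
    obtain ⟨x, hx⟩ := hnonpos
    exact ⟨x, le_trans hx hr⟩
  set S : ℝ → ℝ := fun r => sSup (g '' {x | h x ≤ r}) with hS
  have hSnonneg : ∀ r : ℝ, 0 ≤ r → 0 ≤ S r := by
    intro r hr
    obtain ⟨x, hx⟩ := hLne r hr
    exact le_trans (hgnonneg x) (le_csSup (hbdd _) (mem_image_of_mem _ hx))
  have hSle : ∀ r : ℝ, ∀ x, h x ≤ r → g x ≤ S r :=
    fun r x hx => le_csSup (hbdd _) (mem_image_of_mem _ hx)
  have hSmono : ∀ r r' : ℝ, 0 ≤ r → r ≤ r' → S r ≤ S r' := by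
    intro r r' hr hrr'
    exact csSup_le_csSup (hbdd _) ((hLne r hr).image g)
      (image_mono (fun x hx => le_trans hx hrr'))
  -- the key claim for tendsto of δ₁
  have hclaim : ∀ ε : ℝ, 0 < ε → ∃ c : ℝ, 0 < c ∧ ∀ x : X, h x < c → g x < ε := by
    intro ε hε
    set T : Set X := {x | ε ≤ g x} with hT
    rcases T.eq_empty_or_nonempty with hTe | hTne
    · refine ⟨1, one_pos, fun x _ => ?_⟩
      by_contra hc
      push_neg at hc
      have : x ∈ T := hc
      rw [hTe] at this
      exact this
    · have hTclosed : IsClosed T := isClosed_le continuous_const hgcont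
      obtain ⟨x₀, hx₀T, hx₀min⟩ := hTclosed.isCompact.exists_isMinOn hTne hcont.continuousOn
      have hx₀pos : 0 < h x₀ := hgpos_h x₀ (lt_of_lt_of_le hε hx₀T)
      refine ⟨h x₀, hx₀pos, fun x hx => ?_⟩
      by_contra hc
      push_neg at hc
      exact absurd (hx₀min hc) (not_le.mpr hx)
  set δ₁ : ℝ → ℝ := fun r => S r + r with hδ₁
  set I : ℝ → ENNReal := fun r => ⨅ x ∈ {y | r ≤ h y}, EMetric.infEdist x Aᶜ with hI
  set δ₂ : ℝ → ℝ := fun r => (min (ENNReal.ofReal r) (I r)).toReal with hδ₂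
  have hmin_ne_top : ∀ r : ℝ, min (ENNReal.ofReal r) (I r) ≠ ⊤ :=
    fun r => ne_top_of_le_ne_top ENNReal.ofReal_ne_top (min_le_left _ _)
  have hIpos : ∀ r : ℝ, 0 < r → 0 < I r := by
    intro r hr
    rcases ({y : X | r ≤ h y}).eq_empty_or_nonempty with hKe | hKne
    · rw [hI]
      simp only [hKe]
      simp
    · obtain ⟨x₀, hx₀K, hx₀min⟩ := (hKclosed r).isCompact.exists_isMinOn hKne
        EMetric.continuous_infEdist.continuousOn
      have hx₀pos : 0 < EMetric.infEdist x₀ Aᶜ := by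
        rw [show EMetric.infEdist x₀ Aᶜ = Metric.infEDist x₀ Aᶜ from rfl, EMetric.infEdist_pos_iff_notMem_closure, hAcclosed.closure_eq]
        intro hmem
        rw [hAc] at hmem
        exact absurd (lt_of_lt_of_le hr hx₀K) (not_lt.mpr hmem)
      exact lt_of_lt_of_le hx₀pos (le_iInf₂ hx₀min)
  refine ⟨δ₁, δ₂, ?_, ?_, ?_, ?_, ?_, ?_, ?_⟩
  · -- δ₁ positive
    intro r hr
    have := hSnonneg r hr.1.le
    simp only [hδ₁]
    linarith [hr.1]
  · -- δ₂ positive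
    intro r hr
    refine ENNReal.toReal_pos ?_ (hmin_ne_top r)
    exact (lt_min_iff.mpr ⟨ENNReal.ofReal_pos.mpr hr.1, hIpos r hr.1⟩).ne'
  · -- δ₁ monotone
    intro r hr r' hr' hrr'
    have := hSmono r r' hr.1.le hrr'
    simp only [hδ₁]
    linarith
  · -- δ₂ monotone
    intro r hr r' hr' hrr'
    refine ENNReal.toReal_mono (hmin_ne_top r') (min_le_min (ENNReal.ofReal_le_ofReal hrr') ?_)
    refine le_iInf₂ fun x hx => iInf₂_le x ?_
    exact le_trans hrr' hx
  · -- δ₁ tendsto 0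
    rw [Metric.tendsto_nhdsWithin_nhds]
    intro ε hε
    obtain ⟨c, hc, hcprop⟩ := hclaim (ε / 2) (by linarith)
    refine ⟨min c (ε / 2), lt_min hc (by linarith), fun r hr hrd => ?_⟩
    have hr0 : 0 < r := hr
    rw [Real.dist_eq, sub_zero, abs_of_pos hr0] at hrd
    have hrc : r < c := lt_of_lt_of_le hrd (min_le_left _ _)
    have hrε : r < ε / 2 := lt_of_lt_of_le hrd (min_le_right _ _)
    have hSr : S r ≤ ε / 2 := by
      refine csSup_le ((hLne r hr0.le).image g) ?_
      rintro y ⟨x, hx, rfl⟩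
      exact (hcprop x (lt_of_le_of_lt hx hrc)).le
    rw [Real.dist_eq, sub_zero, abs_of_pos (by simp only [hδ₁]; linarith [hSnonneg r hr0.le])]
    simp only [hδ₁]
    linarith
  · -- δ₂ tendsto 0
    rw [Metric.tendsto_nhdsWithin_nhds]
    intro ε hε
    refine ⟨ε, hε, fun r hr hrd => ?_⟩
    have hr0 : 0 < r := hr
    rw [Real.dist_eq, sub_zero, abs_of_pos hr0] at hrd
    have hle : δ₂ r ≤ r := by
      calc δ₂ r ≤ (ENNReal.ofReal r).toReal :=
            ENNReal.toReal_mono ENNReal.ofReal_ne_top (min_le_left _ _)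
        _ = r := ENNReal.toReal_ofReal hr0.le
    rw [Real.dist_eq, sub_zero, abs_of_nonneg ENNReal.toReal_nonneg]
    exact lt_of_le_of_lt hle hrd
  · -- inclusions
    intro r hr
    constructor
    · intro x hx
      simp only [minusSet, mem_setOf_eq] at hx
      have hne : EMetric.infEdist x Aᶜ ≠ ⊤ := Metric.infEdist_ne_top hAcne
      have h1 : δ₁ r ≤ g x := by
        have := ENNReal.toReal_mono hne hx
        rwa [ENNReal.toReal_ofReal (by simp only [hδ₁]; linarith [hSnonneg r hr.1.le, hr.1])] at this
      by_contra hc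
      simp only [mem_setOf_eq, not_le] at hc
      have h2 : g x ≤ S r := hSle r x hc.le
      simp only [hδ₁] at h1
      linarith [hr.1]
    · intro x hx
      simp only [mem_setOf_eq] at hx
      simp only [minusSet, mem_setOf_eq, hδ₂]
      rw [ENNReal.ofReal_toReal (hmin_ne_top r)]
      exact le_trans (min_le_right _ _) (iInf₂_le x hx)
end

section
/- Let μ be a finite Borel measure on Γ, g : Γ → ℝ integrable, S ⊆ Γ with μ(S) > 0, and define Λ_S := sup { ⨍_A g dμ : A measurable, S ⊆ A }. If A, B are measurable sets with S ⊆ A ∩ B, then Λ_S − ⨍_{A∪B} g dμ ≤ (Λ_S − ⨍_A g dμ) + (Λ_S − ⨍_B g dμ). -/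
open Set MeasureTheory

/-- `Λ_S = sup { ⨍_A g dμ : A measurable, S ⊆ A }`. -/
noncomputable def lambdaSup {Γ : Type*} [MeasurableSpace Γ]
    (μ : MeasureTheory.Measure Γ) (g : Γ → ℝ) (S : Set Γ) : ℝ :=
  sSup {r : ℝ | ∃ A : Set Γ, MeasurableSet A ∧ S ⊆ A ∧ r = ⨍ x in A, g x ∂μ}

/-- Subadditivity of the deficit `Λ_S − ⨍ g` under unions. -/
theorem lambdaSup_deficit_subadditive {Γ : Type*} [MeasurableSpace Γ]
    (μ : MeasureTheory.Measure Γ) [IsFiniteMeasure μ]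
    (g : Γ → ℝ) (hg : Integrable g μ)
    (S : Set Γ) (hμS : 0 < μ S)
    (hbdd : BddAbove {r : ℝ | ∃ A : Set Γ, MeasurableSet A ∧ S ⊆ A ∧ r = ⨍ x in A, g x ∂μ})
    (A B : Set Γ) (hA : MeasurableSet A) (hB : MeasurableSet B)
    (hSA : S ⊆ A) (hSB : S ⊆ B) :
    lambdaSup μ g S - ⨍ x in A ∪ B, g x ∂μ ≤
      (lambdaSup μ g S - ⨍ x in A, g x ∂μ) + (lambdaSup μ g S - ⨍ x in B, g x ∂μ) := by
  set Λ := lambdaSup μ g S with hΛdef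
  have hle : ∀ C : Set Γ, MeasurableSet C → S ⊆ C → ⨍ x in C, g x ∂μ ≤ Λ := fun C hC hSC =>
    le_csSup hbdd ⟨C, hC, hSC, rfl⟩
  have hAB : MeasurableSet (A ∩ B) := hA.inter hB
  have hU : MeasurableSet (A ∪ B) := hA.union hB
  have hSAB : S ⊆ A ∩ B := subset_inter hSA hSB
  set a := (μ A).toReal with ha
  set b := (μ B).toReal with hb
  set u := (μ (A ∪ B)).toReal with hu
  set i := (μ (A ∩ B)).toReal with hi
  have hia : μ (A ∩ B) ≤ μ A := measure_mono inter_subset_left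
  have hipos : 0 < i := ENNReal.toReal_pos (lt_of_lt_of_le hμS (measure_mono hSAB)).ne'
    (measure_ne_top μ _)
  have hapos : 0 < a := ENNReal.toReal_pos (lt_of_lt_of_le hμS (measure_mono hSA)).ne'
    (measure_ne_top μ _)
  have hbpos : 0 < b := ENNReal.toReal_pos (lt_of_lt_of_le hμS (measure_mono hSB)).ne'
    (measure_ne_top μ _)
  have hau : a ≤ u := ENNReal.toReal_le_toReal (measure_ne_top μ _) (measure_ne_top μ _) |>.2
    (measure_mono subset_union_left)
  have hbu : b ≤ u := ENNReal.toReal_le_toReal (measure_ne_top μ _) (measure_ne_top μ _) |>.2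
    (measure_mono subset_union_right)
  have hupos : 0 < u := lt_of_lt_of_le hapos hau
  -- measure identity
  have hmeas : u + i = a + b := by
    rw [ha, hb, hu, hi, ← ENNReal.toReal_add (measure_ne_top μ _) (measure_ne_top μ _),
      ← ENNReal.toReal_add (measure_ne_top μ _) (measure_ne_top μ _),
      measure_union_add_inter A hB]
  -- integral identity
  set IA := ∫ x in A, g x ∂μ with hIA
  set IB := ∫ x in B, g x ∂μ with hIB
  set IU := ∫ x in A ∪ B, g x ∂μ with hIU
  set II := ∫ x in A ∩ B, g x ∂μ with hII
  have hint : IU + II = IA + IB := by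
    have h1 : IU = IA + ∫ x in B \ A, g x ∂μ := by
      rw [hIU, hIA, ← union_diff_self,
        setIntegral_union disjoint_sdiff_right (hB.diff hA) hg.integrableOn hg.integrableOn]
    have hset : (A ∩ B) ∪ (B \ A) = B := by rw [inter_comm, inter_union_diff]
    have hdisj : Disjoint (A ∩ B) (B \ A) := disjoint_sdiff_right.mono_left inter_subset_left
    have h2 := setIntegral_union (μ := μ) (f := g) hdisj (hB.diff hA)
      hg.integrableOn hg.integrableOn
    rw [hset] at h2
    linarith [hIB, hII]
  -- averages as integrals
  have havg : ∀ C : Set Γ, ⨍ x in C, g x ∂μ = (μ C).toReal⁻¹ * ∫ x in C, g x ∂μ := by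
    intro C; rw [setAverage_eq, smul_eq_mul]; rfl
  have hΛA : IA ≤ a * Λ := by
    have := hle A hA hSA
    rw [havg A, ← ha, ← hIA] at this
    calc IA = a * (a⁻¹ * IA) := by field_simp
    _ ≤ a * Λ := by exact mul_le_mul_of_nonneg_left this hapos.le
  have hΛB : IB ≤ b * Λ := by
    have := hle B hB hSB
    rw [havg B, ← hb, ← hIB] at this
    calc IB = b * (b⁻¹ * IB) := by field_simp
    _ ≤ b * Λ := by exact mul_le_mul_of_nonneg_left this hbpos.le
  have hΛI : II ≤ i * Λ := by
    have := hle (A ∩ B) hAB hSAB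
    rw [havg (A ∩ B), ← hi, ← hII] at this
    calc II = i * (i⁻¹ * II) := by field_simp
    _ ≤ i * Λ := by exact mul_le_mul_of_nonneg_left this hipos.le
  -- main chain
  rw [havg (A ∪ B), havg A, havg B, ← ha, ← hb, ← hu, ← hIA, ← hIB, ← hIU]
  have e1 : Λ - u⁻¹ * IU = u⁻¹ * (u * Λ - IU) := by field_simp
  have e2 : Λ - a⁻¹ * IA = a⁻¹ * (a * Λ - IA) := by field_simp
  have e3 : Λ - b⁻¹ * IB = b⁻¹ * (b * Λ - IB) := by field_simp
  rw [e1, e2, e3]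
  have key : u * Λ - IU ≤ (a * Λ - IA) + (b * Λ - IB) := by
    have hmul : (u + i) * Λ = (a + b) * Λ := by rw [hmeas]
    nlinarith [hΛI, hint, hmul]
  calc u⁻¹ * (u * Λ - IU) ≤ u⁻¹ * ((a * Λ - IA) + (b * Λ - IB)) :=
        mul_le_mul_of_nonneg_left key (inv_nonneg.2 hupos.le)
    _ = u⁻¹ * (a * Λ - IA) + u⁻¹ * (b * Λ - IB) := by ring
    _ ≤ a⁻¹ * (a * Λ - IA) + b⁻¹ * (b * Λ - IB) :=
        add_le_add (mul_le_mul_of_nonneg_right (inv_anti₀ hapos hau) (by linarith))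
          (mul_le_mul_of_nonneg_right (inv_anti₀ hbpos hbu) (by linarith))
end

section
/- Let μ be a finite Borel measure on Γ, 0 < g < 1 a continuous function on Γ, and S ⊆ Γ with μ(S) > 0. Define Λ_S := sup { ⨍_A g dμ : A measurable, S ⊆ A }. Then the supremum is attained; in fact, for any sequence of admissible sets A_k with ⨍_{A_k} g dμ ≥ Λ_S − 2^{−k−1}, the set A^∞ := limsup_k A_k satisfies S ⊆ A^∞ and ⨍_{A^∞} g dμ = Λ_S. -/
open Set MeasureTheory Filter Topology

/-- The supremum `Λ_S` is attained: for an almost maximizing sequence `A k`, the set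
`limsup_k A_k` contains `S` and its average equals `Λ_S`. -/
theorem lambdaSup_attained {Γ : Type*} [TopologicalSpace Γ] [MeasurableSpace Γ]
    [BorelSpace Γ] (μ : MeasureTheory.Measure Γ) [IsFiniteMeasure μ]
    (g : Γ → ℝ) (hgcont : Continuous g) (hg0 : ∀ x, 0 < g x) (hg1 : ∀ x, g x < 1)
    (S : Set Γ) (hμS : 0 < μ S)
    (A : ℕ → Set Γ) (hAmeas : ∀ k, MeasurableSet (A k)) (hSA : ∀ k, S ⊆ A k)
    (hAavg : ∀ k, lambdaSup μ g S - ((2 : ℝ) ^ (k + 1))⁻¹ ≤ ⨍ x in A k, g x ∂μ) :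
    S ⊆ (⋂ N, ⋃ k ≥ N, A k) ∧
    ⨍ x in ⋂ N, ⋃ k ≥ N, A k, g x ∂μ = lambdaSup μ g S := by
  have hgint : Integrable g μ := by
    refine (integrable_const (1 : ℝ)).mono' hgcont.aestronglyMeasurable ?_
    filter_upwards with x
    rw [Real.norm_eq_abs, abs_of_pos (hg0 x)]
    exact (hg1 x).le
  set m : Set Γ → ℝ := fun B => (μ B).toReal with hm_def
  set Ig : Set Γ → ℝ := fun B => ∫ x in B, g x ∂μ with hIg_def
  set Λ : ℝ := lambdaSup μ g S with hΛ_def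
  have hav : ∀ B : Set Γ, ⨍ x in B, g x ∂μ = (m B)⁻¹ * Ig B := fun B => by
    rw [setAverage_eq, smul_eq_mul]; rfl
  have hmpos : ∀ B : Set Γ, S ⊆ B → 0 < m B := fun B hSB =>
    ENNReal.toReal_pos (lt_of_lt_of_le hμS (measure_mono hSB)).ne' (measure_ne_top μ B)
  have hm_le : ∀ B : Set Γ, m B ≤ m univ := fun B =>
    ENNReal.toReal_mono (measure_ne_top μ univ) (measure_mono (subset_univ B))
  have hm_nonneg : ∀ B : Set Γ, 0 ≤ m B := fun B => ENNReal.toReal_nonneg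
  have hIg_le : ∀ B : Set Γ, Ig B ≤ m B := fun B => by
    calc Ig B ≤ ∫ _ in B, (1 : ℝ) ∂μ :=
          setIntegral_mono hgint.integrableOn (integrable_const 1).integrableOn
            fun x => (hg1 x).le
      _ = m B := by rw [setIntegral_const, smul_eq_mul, mul_one]; rfl
  -- the supremum is a least upper bound
  have hbdd : BddAbove {r : ℝ | ∃ A' : Set Γ, MeasurableSet A' ∧ S ⊆ A' ∧
      r = ⨍ x in A', g x ∂μ} := by
    refine ⟨1, fun r hr => ?_⟩
    obtain ⟨B, hB, hSB, rfl⟩ := hr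
    rw [hav B, inv_mul_le_iff₀ (hmpos B hSB), mul_one]
    exact hIg_le B
  have hle : ∀ B : Set Γ, MeasurableSet B → S ⊆ B → ⨍ x in B, g x ∂μ ≤ Λ :=
    fun B hB hSB => le_csSup hbdd ⟨B, hB, hSB, rfl⟩
  -- the defect functional
  set D : Set Γ → ℝ := fun B => Λ * m B - Ig B with hD_def
  have hD0 : ∀ B : Set Γ, MeasurableSet B → S ⊆ B → 0 ≤ D B := by
    intro B hB hSB
    have h := hle B hB hSB
    rw [hav B, inv_mul_eq_div, div_le_iff₀ (hmpos B hSB)] at h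
    simpa [hD_def] using sub_nonneg.2 h
  have hDadd : ∀ X Y : Set Γ, MeasurableSet X → MeasurableSet Y → Disjoint X Y →
      D (X ∪ Y) = D X + D Y := by
    intro X Y hX hY hd
    have hmadd : m (X ∪ Y) = m X + m Y := by
      simp only [hm_def]
      rw [measure_union hd hY, ENNReal.toReal_add (measure_ne_top μ X) (measure_ne_top μ Y)]
    have hIadd : Ig (X ∪ Y) = Ig X + Ig Y :=
      setIntegral_union hd hY hgint.integrableOn hgint.integrableOn
    simp only [hD_def, hmadd, hIadd]; ring
  have hDsub : ∀ X Y : Set Γ, MeasurableSet X → MeasurableSet Y → S ⊆ X → S ⊆ Y →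
      D (X ∪ Y) ≤ D X + D Y := by
    intro X Y hX hY hSX hSY
    have h1 : D (X ∪ Y) = D X + D (Y \ X) := by
      rw [← union_diff_self]
      exact hDadd X (Y \ X) hX (hY.diff hX) disjoint_sdiff_self_right
    have h2 : D Y = D (Y ∩ X) + D (Y \ X) := by
      conv_lhs => rw [← inter_union_diff Y X]
      exact hDadd (Y ∩ X) (Y \ X) (hY.inter hX) (hY.diff hX)
        (disjoint_sdiff_self_right.mono_left inter_subset_right)
    have h3 : 0 ≤ D (Y ∩ X) :=
      hD0 (Y ∩ X) (hY.inter hX) (subset_inter hSY hSX)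
    linarith
  have hDk : ∀ k : ℕ, D (A k) ≤ ((2 : ℝ) ^ (k + 1))⁻¹ * m univ := by
    intro k
    have h := hAavg k
    rw [hav (A k)] at h
    have hm := hmpos (A k) (hSA k)
    rw [inv_mul_eq_div, le_div_iff₀ hm] at h
    have h2 : Λ * m (A k) - Ig (A k) ≤ ((2 : ℝ) ^ (k + 1))⁻¹ * m (A k) := by nlinarith
    refine h2.trans ?_
    have hp : (0:ℝ) < ((2 : ℝ) ^ (k + 1))⁻¹ := by positivity
    exact mul_le_mul_of_nonneg_left (hm_le (A k)) hp.le
  -- partial unions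
  set U : ℕ → Set Γ := fun N => ⋃ k, ⋃ (_ : k ≥ N), A k with hU_def
  set C : ℕ → ℕ → Set Γ := fun N j => ⋃ i, ⋃ (_ : i ≤ j), A (N + i) with hC_def
  have hCmeas : ∀ N j, MeasurableSet (C N j) := fun N j =>
    MeasurableSet.iUnion fun i => MeasurableSet.iUnion fun _ => hAmeas _
  have hSC : ∀ N j, S ⊆ C N j := by
    intro N j x hx
    exact mem_iUnion.2 ⟨0, mem_iUnion.2 ⟨Nat.zero_le j, hSA N hx⟩⟩
  have hCmono : ∀ N, Monotone (C N) := by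
    intro N j j' hj x hx
    simp only [hC_def, mem_iUnion] at hx ⊢
    obtain ⟨i, hi, hxi⟩ := hx
    exact ⟨i, hi.trans hj, hxi⟩
  have hCU : ∀ N, (⋃ j, C N j) = U N := by
    intro N
    ext x
    simp only [hC_def, hU_def, mem_iUnion]
    constructor
    · rintro ⟨j, i, _, hx⟩
      exact ⟨N + i, Nat.le_add_right N i, hx⟩
    · rintro ⟨k, hk, hx⟩
      exact ⟨k - N, k - N, le_refl _, by rwa [Nat.add_sub_cancel' hk]⟩
  have hC0 : ∀ N, C N 0 = A N := by
    intro N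
    ext x
    simp only [hC_def, mem_iUnion, Nat.le_zero]
    constructor
    · rintro ⟨i, rfl, hx⟩; simpa using hx
    · intro hx; exact ⟨0, rfl, by simpa using hx⟩
  have hCsucc : ∀ N j, C N (j + 1) = C N j ∪ A (N + (j + 1)) := by
    intro N j
    ext x
    simp only [hC_def, mem_iUnion, mem_union]
    constructor
    · rintro ⟨i, hi, hx⟩
      rcases eq_or_lt_of_le hi with rfl | h
      · exact Or.inr hx
      · exact Or.inl ⟨i, Nat.lt_succ_iff.mp h, hx⟩
    · rintro (⟨i, hi, hx⟩ | hx)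
      · exact ⟨i, hi.trans (Nat.le_succ j), hx⟩
      · exact ⟨j + 1, le_refl _, hx⟩
  -- inductive bound on the defect of partial unions
  have hDC : ∀ N j, D (C N j) ≤ ((2 : ℝ) ^ N)⁻¹ * m univ - ((2 : ℝ) ^ (N + j + 1))⁻¹ * m univ := by
    intro N j
    induction j with
    | zero =>
      rw [hC0 N]
      have h := hDk N
      have hpow : ((2 : ℝ) ^ N)⁻¹ - ((2 : ℝ) ^ (N + 0 + 1))⁻¹ = ((2 : ℝ) ^ (N + 1))⁻¹ := by
        norm_num [pow_succ]
        field_simp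
        ring
      rw [← sub_mul, hpow]
      exact h
    | succ j ih =>
      rw [hCsucc N j]
      have h1 := hDsub (C N j) (A (N + (j + 1))) (hCmeas N j) (hAmeas _) (hSC N j) (hSA _)
      have h2 := hDk (N + (j + 1))
      have hpow : ((2 : ℝ) ^ (N + j + 1))⁻¹
          = ((2 : ℝ) ^ (N + (j + 1) + 1))⁻¹ + ((2 : ℝ) ^ (N + (j + 1) + 1))⁻¹ := by
        have heq : N + (j + 1) + 1 = (N + j + 1) + 1 := by ring
        rw [heq, pow_succ]
        field_simp
        ring
      calc D (C N j ∪ A (N + (j + 1))) ≤ D (C N j) + D (A (N + (j + 1))) := h1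
        _ ≤ (((2 : ℝ) ^ N)⁻¹ * m univ - ((2 : ℝ) ^ (N + j + 1))⁻¹ * m univ)
            + ((2 : ℝ) ^ (N + (j + 1) + 1))⁻¹ * m univ := add_le_add ih h2
        _ = ((2 : ℝ) ^ N)⁻¹ * m univ - ((2 : ℝ) ^ (N + (j + 1) + 1))⁻¹ * m univ := by
            rw [hpow]; ring
  have hDC' : ∀ N j, D (C N j) ≤ ((2 : ℝ) ^ N)⁻¹ * m univ := by
    intro N j
    refine (hDC N j).trans ?_
    have h0 : (0:ℝ) ≤ ((2 : ℝ) ^ (N + j + 1))⁻¹ * m univ := by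
      have := hm_nonneg univ
      positivity
    linarith
  -- pass to the limit in j : defect bound for U N
  have hUmeas : ∀ N, MeasurableSet (U N) := fun N =>
    MeasurableSet.iUnion fun k => MeasurableSet.iUnion fun _ => hAmeas k
  have hSU : ∀ N, S ⊆ U N := fun N x hx =>
    mem_iUnion.2 ⟨N, mem_iUnion.2 ⟨le_refl N, hSA N hx⟩⟩
  have htm : ∀ N, Tendsto (fun j => m (C N j)) atTop (𝓝 (m (U N))) := by
    intro N
    have h := tendsto_measure_iUnion_atTop (μ := μ) (hCmono N)
    rw [hCU N] at h
    exact (ENNReal.tendsto_toReal (measure_ne_top μ _)).comp h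
  have htI : ∀ N, Tendsto (fun j => Ig (C N j)) atTop (𝓝 (Ig (U N))) := by
    intro N
    have h := tendsto_setIntegral_of_monotone (hCmeas N) (hCmono N)
      (hgint.integrableOn (s := ⋃ j, C N j))
    rwa [hCU N] at h
  have htD : ∀ N, Tendsto (fun j => D (C N j)) atTop (𝓝 (D (U N))) := fun N =>
    ((htm N).const_mul Λ).sub (htI N)
  have hDU : ∀ N, D (U N) ≤ ((2 : ℝ) ^ N)⁻¹ * m univ := fun N =>
    le_of_tendsto (htD N) (Eventually.of_forall (hDC' N))
  have hDU0 : ∀ N, 0 ≤ D (U N) := fun N => hD0 (U N) (hUmeas N) (hSU N)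
  -- pass to the limit in N
  have hUanti : Antitone U := by
    intro N N' h x hx
    simp only [hU_def, mem_iUnion] at hx ⊢
    obtain ⟨k, hk, hxk⟩ := hx
    exact ⟨k, h.trans hk, hxk⟩
  set Ainf : Set Γ := ⋂ N, U N with hAinf_def
  have htm2 : Tendsto (fun N => m (U N)) atTop (𝓝 (m Ainf)) := by
    have h := tendsto_measure_iInter_atTop (μ := μ)
      (fun N => (hUmeas N).nullMeasurableSet) hUanti ⟨0, measure_ne_top μ _⟩
    exact (ENNReal.tendsto_toReal (measure_ne_top μ _)).comp h
  have htI2 : Tendsto (fun N => Ig (U N)) atTop (𝓝 (Ig Ainf)) :=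
    tendsto_setIntegral_of_antitone hUmeas hUanti ⟨0, hgint.integrableOn⟩
  have htD2 : Tendsto (fun N => D (U N)) atTop (𝓝 (D Ainf)) :=
    (htm2.const_mul Λ).sub htI2
  have hbound : Tendsto (fun N : ℕ => ((2 : ℝ) ^ N)⁻¹ * m univ) atTop (𝓝 0) := by
    have h : Tendsto (fun N : ℕ => ((2 : ℝ)⁻¹) ^ N) atTop (𝓝 0) :=
      tendsto_pow_atTop_nhds_zero_of_lt_one (by norm_num) (by norm_num)
    have h2 := h.mul_const (m univ)
    rw [zero_mul] at h2
    simpa [inv_pow] using h2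
  have htD0 : Tendsto (fun N => D (U N)) atTop (𝓝 0) :=
    squeeze_zero hDU0 hDU hbound
  have hDAinf : D Ainf = 0 := tendsto_nhds_unique htD2 htD0
  have hSAinf : S ⊆ Ainf := subset_iInter hSU
  constructor
  · exact hSAinf
  · have hmA : 0 < m Ainf := hmpos Ainf hSAinf
    have hIgA : Ig Ainf = Λ * m Ainf := by
      simp only [hD_def] at hDAinf
      linarith
    rw [hav Ainf, hIgA]
    field_simp
end

section
/- Let μ be a finite Borel measure on Γ, g : Γ → ℝ measurable and bounded, S ⊆ Γ with μ(S) > 0, Λ_S := sup { ⨍_A g dμ : A measurable, S ⊆ A }, and A* := S ∪ {g ≥ Λ_S}. Then: (i) A* attains the supremum, i.e. ⨍_{A*} g dμ = Λ_S; (ii) every maximizer A^∞ (an admissible set with ⨍_{A^∞} g dμ = Λ_S) satisfies μ(A^∞ \ A*) = 0; and (iii) if μ({g = Λ_S} ∩ Sᶜ) = 0, then any maximizer equals A* up to a μ-null set. -/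
open Set MeasureTheory

section lamAux

variable {Γ : Type*} [MeasurableSpace Γ] {μ : Measure Γ} [IsFiniteMeasure μ]
  {g : Γ → ℝ} {S : Set Γ} {C : ℝ}

lemma lam_integrable (hgmeas : Measurable g) (hgbdd : ∀ x, |g x| ≤ C) :
    Integrable g μ :=
  (integrable_const C).mono' hgmeas.aestronglyMeasurable
    (ae_of_all _ fun x => by simpa using hgbdd x)

lemma lam_toReal_pos (hμS : 0 < μ S) {A : Set Γ} (hSA : S ⊆ A) :
    0 < (μ A).toReal :=
  ENNReal.toReal_pos (ne_of_gt (lt_of_lt_of_le hμS (measure_mono hSA)))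
    (measure_ne_top μ A)

lemma lam_le (hgmeas : Measurable g) (hgbdd : ∀ x, |g x| ≤ C)
    (hμS : 0 < μ S) {A : Set Γ} (hA : MeasurableSet A) (hSA : S ⊆ A) :
    ⨍ x in A, g x ∂μ ≤ lambdaSup μ g S := by
  have hC : 0 ≤ C := by
    obtain ⟨x, -⟩ := nonempty_of_measure_ne_zero hμS.ne'
    exact (abs_nonneg _).trans (hgbdd x)
  apply le_csSup
  · refine ⟨C, ?_⟩
    rintro r ⟨B, hB, hSB, rfl⟩
    rw [setAverage_eq, smul_eq_mul]
    rcases eq_or_ne ((μ B).toReal) 0 with h0 | h0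
    · simp [measureReal_def, h0, hC]
    have htB : 0 < (μ B).toReal := lt_of_le_of_ne ENNReal.toReal_nonneg (Ne.symm h0)
    have hb : ‖∫ x in B, g x ∂μ‖ ≤ C * (μ B).toReal :=
      norm_setIntegral_le_of_norm_le_const (measure_lt_top μ B)
        (fun x _ => by simpa using hgbdd x)
    have : ∫ x in B, g x ∂μ ≤ C * (μ B).toReal :=
      (le_abs_self _).trans hb
    rw [measureReal_def, inv_mul_le_iff₀ htB]
    linarith [mul_comm C ((μ B).toReal)]
  · exact ⟨A, hA, hSA, rfl⟩

lemma lam_int_le (hgmeas : Measurable g) (hgbdd : ∀ x, |g x| ≤ C)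
    (hμS : 0 < μ S) {A : Set Γ} (hA : MeasurableSet A) (hSA : S ⊆ A) :
    ∫ x in A, g x ∂μ ≤ lambdaSup μ g S * (μ A).toReal := by
  have ht : 0 < (μ A).toReal := lam_toReal_pos hμS hSA
  have h := lam_le hgmeas hgbdd hμS hA hSA
  rw [setAverage_eq, smul_eq_mul, measureReal_def, inv_mul_le_iff₀ ht] at h
  linarith [mul_comm (lambdaSup μ g S) ((μ A).toReal)]

lemma lam_int_eq (hμS : 0 < μ S) {A : Set Γ} (hSA : S ⊆ A)
    (hmax : ⨍ x in A, g x ∂μ = lambdaSup μ g S) :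
    ∫ x in A, g x ∂μ = lambdaSup μ g S * (μ A).toReal := by
  have ht : 0 < (μ A).toReal := lam_toReal_pos hμS hSA
  rw [setAverage_eq, smul_eq_mul, measureReal_def] at hmax
  field_simp at hmax
  linarith [mul_comm (lambdaSup μ g S) ((μ A).toReal)]

/-- If `f > 0` on `B` but its integral over `B` is `≤ 0`, then `B` is null. -/
lemma lam_null_of_int_le {f : Γ → ℝ} {B : Set Γ} (hB : MeasurableSet B)
    (hint : IntegrableOn f B μ) (hpos : ∀ x ∈ B, 0 < f x)
    (hle : ∫ x in B, f x ∂μ ≤ 0) : μ B = 0 := by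
  by_contra hne
  have htB : 0 < μ B := pos_iff_ne_zero.2 hne
  have h := (setIntegral_pos_iff_support_of_nonneg_ae
      (ae_restrict_of_forall_mem hB fun x hx => (hpos x hx).le) hint).2
      (htB.trans_le (measure_mono fun x hx => ⟨(hpos x hx).ne', hx⟩))
  linarith

/-- Adding mass where `g > Λ` outside a maximizer is impossible. -/
lemma lam_add_null (hgmeas : Measurable g) (hgbdd : ∀ x, |g x| ≤ C)
    (hμS : 0 < μ S) {A : Set Γ} (hA : MeasurableSet A) (hSA : S ⊆ A)
    (hmax : ⨍ x in A, g x ∂μ = lambdaSup μ g S) :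
    μ ({x | lambdaSup μ g S < g x} \ A) = 0 := by
  set Λ := lambdaSup μ g S with hΛ
  set B : Set Γ := {x | Λ < g x} \ A with hBdef
  have hB : MeasurableSet B := (measurableSet_lt measurable_const hgmeas).diff hA
  have hgint : Integrable g μ := lam_integrable hgmeas hgbdd
  have hdisj : Disjoint A B := disjoint_sdiff_right
  have hiu : ∫ x in A ∪ B, g x ∂μ = (∫ x in A, g x ∂μ) + ∫ x in B, g x ∂μ :=
    setIntegral_union hdisj hB hgint.integrableOn hgint.integrableOn
  have hm : (μ (A ∪ B)).toReal = (μ A).toReal + (μ B).toReal := by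
    rw [measure_union hdisj hB,
      ENNReal.toReal_add (measure_ne_top _ _) (measure_ne_top _ _)]
  have h1 : ∫ x in A ∪ B, g x ∂μ ≤ Λ * (μ (A ∪ B)).toReal :=
    lam_int_le hgmeas hgbdd hμS (hA.union hB) (hSA.trans subset_union_left)
  have h2 : ∫ x in A, g x ∂μ = Λ * (μ A).toReal := lam_int_eq hμS hSA hmax
  have h3 : ∫ x in B, g x ∂μ ≤ Λ * (μ B).toReal := by
    rw [hm] at h1; rw [hiu, h2] at h1; linarith
  have hintB : IntegrableOn (fun x => g x - Λ) B μ :=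
    hgint.integrableOn.sub (integrable_const Λ).integrableOn
  have hle : ∫ x in B, (g x - Λ) ∂μ ≤ 0 := by
    rw [integral_sub hgint.integrableOn (integrable_const Λ).integrableOn,
      setIntegral_const, smul_eq_mul, measureReal_def]
    linarith [mul_comm ((μ B).toReal) Λ]
  exact lam_null_of_int_le hB hintB (fun x hx => sub_pos.2 hx.1) hle

/-- A maximizer cannot carry mass outside `S` where `g < Λ`. -/
lemma lam_sub_null (hgmeas : Measurable g) (hgbdd : ∀ x, |g x| ≤ C)
    (hS : MeasurableSet S) (hμS : 0 < μ S)
    {A : Set Γ} (hA : MeasurableSet A) (hSA : S ⊆ A)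
    (hmax : ⨍ x in A, g x ∂μ = lambdaSup μ g S) :
    μ ((A \ S) ∩ {x | g x < lambdaSup μ g S}) = 0 := by
  set Λ := lambdaSup μ g S with hΛ
  set B : Set Γ := (A \ S) ∩ {x | g x < Λ} with hBdef
  have hB : MeasurableSet B :=
    (hA.diff hS).inter (measurableSet_lt hgmeas measurable_const)
  have hBA : B ⊆ A := fun x hx => hx.1.1
  have hSAB : S ⊆ A \ B := fun x hx => ⟨hSA hx, fun hb => hb.1.2 hx⟩
  have hgint : Integrable g μ := lam_integrable hgmeas hgbdd
  have hdisj : Disjoint (A \ B) B := disjoint_sdiff_left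
  have hiu : ∫ x in A, g x ∂μ = (∫ x in A \ B, g x ∂μ) + ∫ x in B, g x ∂μ := by
    rw [← setIntegral_union hdisj hB hgint.integrableOn hgint.integrableOn,
      diff_union_of_subset hBA]
  have hm : (μ A).toReal = (μ (A \ B)).toReal + (μ B).toReal := by
    rw [← ENNReal.toReal_add (measure_ne_top _ _) (measure_ne_top _ _),
      ← measure_union hdisj hB, diff_union_of_subset hBA]
  have h1 : ∫ x in A \ B, g x ∂μ ≤ Λ * (μ (A \ B)).toReal :=
    lam_int_le hgmeas hgbdd hμS (hA.diff hB) hSAB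
  have h2 : ∫ x in A, g x ∂μ = Λ * (μ A).toReal := lam_int_eq hμS hSA hmax
  have h3 : Λ * (μ B).toReal ≤ ∫ x in B, g x ∂μ := by
    rw [hm] at h2; rw [hiu] at h2; nlinarith
  have hintB : IntegrableOn (fun x => Λ - g x) B μ :=
    (integrable_const Λ).integrableOn.sub hgint.integrableOn
  have hle : ∫ x in B, (Λ - g x) ∂μ ≤ 0 := by
    rw [integral_sub (integrable_const Λ).integrableOn hgint.integrableOn,
      setIntegral_const, smul_eq_mul, measureReal_def]
    linarith [mul_comm ((μ B).toReal) Λ]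
  exact lam_null_of_int_le hB hintB (fun x hx => sub_pos.2 hx.2) hle

end lamAux

/-- The set `A* = S ∪ {g ≥ Λ_S}` is a maximizer, any maximizer is contained in `A*`
up to a null set, and under the extra condition `μ({g = Λ_S} ∩ Sᶜ) = 0` any maximizer
equals `A*` up to a null set. -/
theorem lambdaSup_maximizer {Γ : Type*} [MeasurableSpace Γ]
    (μ : MeasureTheory.Measure Γ) [IsFiniteMeasure μ]
    (g : Γ → ℝ) (hgmeas : Measurable g) (C : ℝ) (hgbdd : ∀ x, |g x| ≤ C)
    (S : Set Γ) (hS : MeasurableSet S) (hμS : 0 < μ S)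
    (hattained : ∃ A₀ : Set Γ, MeasurableSet A₀ ∧ S ⊆ A₀ ∧
      ⨍ x in A₀, g x ∂μ = lambdaSup μ g S) :
    (⨍ x in S ∪ {x | lambdaSup μ g S ≤ g x}, g x ∂μ = lambdaSup μ g S) ∧
    (∀ Ainf : Set Γ, MeasurableSet Ainf → S ⊆ Ainf →
      ⨍ x in Ainf, g x ∂μ = lambdaSup μ g S →
      μ (Ainf \ (S ∪ {x | lambdaSup μ g S ≤ g x})) = 0) ∧
    (μ ({x | g x = lambdaSup μ g S} ∩ Sᶜ) = 0 →
      ∀ Ainf : Set Γ, MeasurableSet Ainf → S ⊆ Ainf →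
        ⨍ x in Ainf, g x ∂μ = lambdaSup μ g S →
        μ (symmDiff Ainf (S ∪ {x | lambdaSup μ g S ≤ g x})) = 0) := by
  set Λ := lambdaSup μ g S with hΛ
  set Ast : Set Γ := S ∪ {x | Λ ≤ g x} with hAstdef
  have hAst : MeasurableSet Ast :=
    hS.union (measurableSet_le measurable_const hgmeas)
  have hSAst : S ⊆ Ast := subset_union_left
  have hgint : Integrable g μ := lam_integrable hgmeas hgbdd
  obtain ⟨A₀, hA₀m, hSA₀, hA₀max⟩ := hattained
  -- Part (ii)
  have hii : ∀ Ainf : Set Γ, MeasurableSet Ainf → S ⊆ Ainf →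
      ⨍ x in Ainf, g x ∂μ = Λ → μ (Ainf \ Ast) = 0 := by
    intro Ainf hAm hSA hAmax
    refine measure_mono_null ?_ (lam_sub_null hgmeas hgbdd hS hμS hAm hSA hAmax)
    intro x hx
    have h1 : x ∉ S := fun h => hx.2 (Or.inl h)
    have h2 : ¬ Λ ≤ g x := fun h => hx.2 (Or.inr h)
    exact ⟨⟨hx.1, h1⟩, not_le.1 h2⟩
  -- Part (i)
  have hN1 : μ (A₀ \ Ast) = 0 := hii A₀ hA₀m hSA₀ hA₀max
  have haeq : (Ast ∩ A₀ : Set Γ) =ᵐ[μ] A₀ := by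
    rw [ae_eq_set]
    constructor
    · exact measure_mono_null (fun x hx => ((hx.2 hx.1.2).elim : x ∈ (∅ : Set Γ)))
        measure_empty
    · rw [diff_inter_self_eq_diff]; exact hN1
  have hi : ⨍ x in Ast, g x ∂μ = Λ := by
    refine le_antisymm (lam_le hgmeas hgbdd hμS hAst hSAst) ?_
    have ht : 0 < (μ Ast).toReal := lam_toReal_pos hμS hSAst
    have hdisj : Disjoint (Ast ∩ A₀) (Ast \ A₀) :=
      Disjoint.mono_left inter_subset_right disjoint_sdiff_right
    have hsplit : ∫ x in Ast, g x ∂μ =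
        (∫ x in Ast ∩ A₀, g x ∂μ) + ∫ x in Ast \ A₀, g x ∂μ := by
      rw [← setIntegral_union hdisj (hAst.diff hA₀m) hgint.integrableOn
        hgint.integrableOn, inter_union_diff]
    have h1 : ∫ x in Ast ∩ A₀, g x ∂μ = Λ * (μ A₀).toReal := by
      rw [setIntegral_congr_set haeq]
      exact lam_int_eq hμS hSA₀ hA₀max
    have h2 : Λ * (μ (Ast \ A₀)).toReal ≤ ∫ x in Ast \ A₀, g x ∂μ :=
      setIntegral_ge_of_const_le_real (hAst.diff hA₀m) (measure_ne_top _ _)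
        (fun x hx => hx.1.resolve_left fun hs => hx.2 (hSA₀ hs))
        hgint.integrableOn
    have hmAst : (μ Ast).toReal = (μ A₀).toReal + (μ (Ast \ A₀)).toReal := by
      rw [← measure_congr haeq, ← ENNReal.toReal_add (measure_ne_top _ _)
        (measure_ne_top _ _), measure_inter_add_diff Ast hA₀m]
    have hlow : Λ * (μ Ast).toReal ≤ ∫ x in Ast, g x ∂μ := by
      rw [hmAst]; rw [hsplit, h1]; nlinarith
    rw [setAverage_eq, smul_eq_mul, measureReal_def, le_inv_mul_iff₀ ht]
    linarith [mul_comm Λ ((μ Ast).toReal)]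
  refine ⟨hi, hii, ?_⟩
  -- Part (iii)
  intro hnull Ainf hAm hSA hAmax
  have h2 : μ (Ast \ Ainf) = 0 := by
    refine measure_mono_null (fun x hx => ?_)
      (measure_union_null (lam_add_null hgmeas hgbdd hμS hAm hSA hAmax) hnull)
    have hxS : x ∉ S := fun hs => hx.2 (hSA hs)
    have hxg : Λ ≤ g x := hx.1.resolve_left hxS
    rcases eq_or_lt_of_le hxg with heq | hlt
    · exact Or.inr ⟨heq.symm, hxS⟩
    · exact Or.inl ⟨hlt, hx.2⟩
  rw [Set.symmDiff_def]
  exact measure_union_null (hii Ainf hAm hSA hAmax) h2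
end

section
/- Let Γ be a compact metric space with finite Borel measure μ, g : Γ → ℝ continuous, and S ⊆ Γ open with μ(S) > 0. Define Λ_T := sup { ⨍_A g dμ : A measurable, T ⊆ A } for T with μ(T) > 0, and S_{-δ} := {x : d(x, Sᶜ) ≥ δ}. Then Λ_{S_{-δ}} decreases to Λ_S as δ ↓ 0, i.e. δ ↦ Λ_{S_{-δ}} is non-decreasing in δ and lim_{δ→0} Λ_{S_{-δ}} = Λ_S. -/
open Set MeasureTheory Filter Topology

/-- Continuity of `Λ` along inner approximations: `Λ_{S_{-δ}} ↓ Λ_S` as `δ ↓ 0`. -/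
theorem lambdaSup_inner_continuity {Γ : Type*} [MetricSpace Γ] [CompactSpace Γ]
    [MeasurableSpace Γ] [BorelSpace Γ]
    (μ : MeasureTheory.Measure Γ) [IsFiniteMeasure μ]
    (g : Γ → ℝ) (hgcont : Continuous g)
    (S : Set Γ) (hSopen : IsOpen S) (hμS : 0 < μ S)
    (δ₀ : ℝ) (hδ₀ : 0 < δ₀)
    (hpos : ∀ δ ∈ Set.Ioo (0:ℝ) δ₀, 0 < μ (minusSet S δ)) :
    MonotoneOn (fun δ : ℝ => lambdaSup μ g (minusSet S δ)) (Set.Ioo (0:ℝ) δ₀) ∧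
    Tendsto (fun δ : ℝ => lambdaSup μ g (minusSet S δ)) (nhdsWithin 0 (Set.Ioi 0))
      (nhds (lambdaSup μ g S)) := by
  classical
  -- a uniform bound for `g`
  obtain ⟨C₀, hC₀⟩ := (isCompact_range hgcont.norm).bddAbove
  set C : ℝ := max C₀ 0 with hCdef
  have hC0 : 0 ≤ C := le_max_right _ _
  have hgC : ∀ x, ‖g x‖ ≤ C := fun x => le_trans (hC₀ ⟨x, rfl⟩) (le_max_left _ _)
  have hgint : Integrable g μ :=
    integrableOn_univ.mp (hgcont.continuousOn.integrableOn_compact isCompact_univ)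
  -- the admissible set of averages
  set P : Set Γ → Set ℝ :=
    fun T => {r : ℝ | ∃ A : Set Γ, MeasurableSet A ∧ T ⊆ A ∧ r = ⨍ x in A, g x ∂μ} with hP
  have hlam : ∀ T : Set Γ, lambdaSup μ g T = sSup (P T) := fun T => rfl
  -- bound on set integrals
  have hIb : ∀ A : Set Γ, MeasurableSet A → |∫ x in A, g x ∂μ| ≤ C * (μ A).toReal := by
    intro A hA
    exact norm_setIntegral_le_of_norm_le_const_ae' (measure_lt_top μ A)
      (Eventually.of_forall fun x _ => hgC x)
  -- bound on averages
  have havg : ∀ A : Set Γ, MeasurableSet A → |⨍ x in A, g x ∂μ| ≤ C := by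
    intro A hA
    rw [setAverage_eq, smul_eq_mul, abs_mul, abs_inv, abs_of_nonneg measureReal_nonneg]
    rcases eq_or_ne (μ A) 0 with h0 | h0
    · simp [measureReal_def, h0, hC0]
    · have ht : 0 < (μ A).toReal := ENNReal.toReal_pos h0 (measure_ne_top μ A)
      calc (μ A).toReal⁻¹ * |∫ x in A, g x ∂μ|
          ≤ (μ A).toReal⁻¹ * (C * (μ A).toReal) := by
            exact mul_le_mul_of_nonneg_left (hIb A hA) (by positivity)
        _ = C := by field_simp
  have hne : ∀ T : Set Γ, (P T).Nonempty :=
    fun T => ⟨_, univ, MeasurableSet.univ, subset_univ T, rfl⟩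
  have hbdd : ∀ T : Set Γ, BddAbove (P T) := by
    intro T
    refine ⟨C, fun r hr => ?_⟩
    obtain ⟨A, hA, -, rfl⟩ := hr
    exact (abs_le.mp (havg A hA)).2
  -- monotonicity of lambdaSup under inclusion
  have hmono : ∀ T T' : Set Γ, T ⊆ T' → lambdaSup μ g T' ≤ lambdaSup μ g T := by
    intro T T' h
    rw [hlam, hlam]
    refine csSup_le_csSup (hbdd T) (hne T') ?_
    rintro r ⟨A, hA, hTA, rfl⟩
    exact ⟨A, hA, h.trans hTA, rfl⟩
  have hminus_anti : ∀ δ δ' : ℝ, δ ≤ δ' → minusSet S δ' ⊆ minusSet S δ :=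
    fun δ δ' h x hx => le_trans (ENNReal.ofReal_le_ofReal h) hx
  have hsubS : ∀ δ : ℝ, 0 < δ → minusSet S δ ⊆ S := by
    intro δ hδ x hx
    by_contra h
    have h0 : EMetric.infEdist x Sᶜ = 0 := EMetric.infEdist_zero_of_mem h
    have hx' : ENNReal.ofReal δ ≤ EMetric.infEdist x Sᶜ := hx
    rw [h0] at hx'
    exact absurd (le_antisymm hx' zero_le) (ENNReal.ofReal_pos.mpr hδ).ne'
  have hminus_meas : ∀ δ : ℝ, MeasurableSet (minusSet S δ) := by
    intro δ
    have : IsClosed (minusSet S δ) :=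
      isClosed_Ici.preimage EMetric.continuous_infEdist
    exact this.measurableSet
  have hlow : ∀ δ : ℝ, 0 < δ → lambdaSup μ g S ≤ lambdaSup μ g (minusSet S δ) :=
    fun δ hδ => hmono _ _ (hsubS δ hδ)
  constructor
  · intro a ha b hb hab
    exact hmono _ _ (hminus_anti a b hab)
  -- the key quantitative estimate
  set δ₁ : ℝ := δ₀ / 2 with hδ₁def
  have hδ₁ : δ₁ ∈ Set.Ioo (0:ℝ) δ₀ := ⟨by positivity, by linarith⟩
  set m₀ : ℝ := (μ (minusSet S δ₁)).toReal with hm₀def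
  have hm₀ : 0 < m₀ := ENNReal.toReal_pos (hpos δ₁ hδ₁).ne' (measure_ne_top μ _)
  set K : ℝ := 2 * C / m₀ with hKdef
  have hK0 : 0 ≤ K := by positivity
  have key : ∀ δ : ℝ, δ ∈ Set.Ioc (0:ℝ) δ₁ →
      lambdaSup μ g (minusSet S δ) ≤
        lambdaSup μ g S + K * (μ (S \ minusSet S δ)).toReal := by
    intro δ hδ
    rw [hlam]
    refine csSup_le (hne _) ?_
    rintro r ⟨A, hA, hTA, rfl⟩
    set b' : ℝ := (μ (S \ minusSet S δ)).toReal with hb'def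
    have hb'0 : 0 ≤ b' := ENNReal.toReal_nonneg
    set B : Set Γ := A ∪ S with hBdef
    have hBmeas : MeasurableSet B := hA.union hSopen.measurableSet
    have hBmem : (⨍ x in B, g x ∂μ) ∈ P S := ⟨B, hBmeas, subset_union_right, rfl⟩
    have hBle : (⨍ x in B, g x ∂μ) ≤ lambdaSup μ g S := le_csSup (hbdd S) hBmem
    -- arithmetic setup
    set a : ℝ := (μ A).toReal with hadef
    set b : ℝ := (μ (S \ A)).toReal with hbdef
    set I : ℝ := ∫ x in A, g x ∂μ with hIdef
    set J : ℝ := ∫ x in S \ A, g x ∂μ with hJdef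
    have hSA : MeasurableSet (S \ A) := hSopen.measurableSet.diff hA
    have hdisj : Disjoint A (S \ A) := disjoint_sdiff_right
    have hBeq : B = A ∪ (S \ A) := by rw [hBdef, union_diff_self]
    have hμB : (μ B).toReal = a + b := by
      rw [hBeq, measure_union hdisj hSA,
        ENNReal.toReal_add (measure_ne_top μ _) (measure_ne_top μ _)]
    have hintB : ∫ x in B, g x ∂μ = I + J := by
      rw [hBeq, setIntegral_union hdisj hSA hgint.integrableOn hgint.integrableOn]
    have ha0 : m₀ ≤ a := by
      apply ENNReal.toReal_mono (measure_ne_top μ _)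
      exact measure_mono ((hminus_anti δ δ₁ hδ.2).trans hTA)
    have hapos : 0 < a := lt_of_lt_of_le hm₀ ha0
    have hb0 : 0 ≤ b := ENNReal.toReal_nonneg
    have hbb' : b ≤ b' := by
      apply ENNReal.toReal_mono (measure_ne_top μ _)
      exact measure_mono (diff_subset_diff_right hTA)
    have hIle : |I| ≤ C * a := hIb A hA
    have hJle : |J| ≤ C * b := hIb _ hSA
    have havgA : (⨍ x in A, g x ∂μ) = a⁻¹ * I := by
      rw [setAverage_eq, smul_eq_mul]; rfl
    have havgB : (⨍ x in B, g x ∂μ) = (a + b)⁻¹ * (I + J) := by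
      rw [setAverage_eq, smul_eq_mul, measureReal_def, hμB, hintB]
    -- the main inequality
    have h1 : a⁻¹ * I - (a + b)⁻¹ * (I + J) = (b * I - a * J) / (a * (a + b)) := by
      field_simp
      ring
    have hI1 : I ≤ C * a := (abs_le.mp hIle).2
    have hJ1 : -(C * b) ≤ J := (abs_le.mp hJle).1
    have h2 : b * I - a * J ≤ 2 * C * (a * b) := by nlinarith
    have hden : 0 < a * (a + b) := by nlinarith
    have h3 : (b * I - a * J) / (a * (a + b)) ≤ 2 * C * (a * b) / (a * (a + b)) :=
      (div_le_div_iff_of_pos_right hden).mpr h2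
    have h4 : 2 * C * (a * b) / (a * (a + b)) = 2 * C * (b / (a + b)) := by
      field_simp
    have h5 : b / (a + b) ≤ b' / m₀ :=
      div_le_div₀ hb'0 hbb' hm₀ (by linarith)
    have h6 : a⁻¹ * I ≤ (a + b)⁻¹ * (I + J) + K * b' := by
      have : a⁻¹ * I - (a + b)⁻¹ * (I + J) ≤ 2 * C * (b' / m₀) := by
        rw [h1]
        calc (b * I - a * J) / (a * (a + b)) ≤ 2 * C * (a * b) / (a * (a + b)) := h3
          _ = 2 * C * (b / (a + b)) := h4
          _ ≤ 2 * C * (b' / m₀) := by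
              apply mul_le_mul_of_nonneg_left h5 (by positivity)
      have hKb : K * b' = 2 * C * (b' / m₀) := by
        rw [hKdef]; ring
      linarith [this]
    rw [havgA]
    calc a⁻¹ * I ≤ (a + b)⁻¹ * (I + J) + K * b' := h6
      _ = (⨍ x in B, g x ∂μ) + K * b' := by rw [havgB]
      _ ≤ lambdaSup μ g S + K * b' := by linarith [hBle]
  -- measure of the difference tends to zero along 1/(n+1)
  set c : ℕ → ℝ := fun n => (n + 1 : ℝ)⁻¹ with hcdef
  have hcpos : ∀ n : ℕ, 0 < c n := fun n => by positivity
  have hcanti : ∀ ⦃n m : ℕ⦄, n ≤ m → c m ≤ c n := by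
    intro n m h
    have h1 : ((n : ℝ) + 1) ≤ (m : ℝ) + 1 := by
      have : (n : ℝ) ≤ (m : ℝ) := Nat.cast_le.mpr h
      linarith
    exact inv_anti₀ (by positivity) h1
  have hctend : Tendsto c atTop (𝓝 0) := tendsto_one_div_add_atTop_nhds_zero_nat.congr (by
    intro n; simp [hcdef, one_div])
  have hmeas_tend :
      Tendsto (fun n : ℕ => μ (S \ minusSet S (c n))) atTop (𝓝 0) := by
    have hset : ∀ n : ℕ, NullMeasurableSet (S \ minusSet S (c n)) μ :=
      fun n => (hSopen.measurableSet.diff (hminus_meas _)).nullMeasurableSet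
    have hanti : Antitone fun n : ℕ => S \ minusSet S (c n) := by
      intro n m h
      exact diff_subset_diff_right (hminus_anti _ _ (hcanti h))
    have hiInter : ⋂ n, (S \ minusSet S (c n)) = ∅ := by
      ext x
      simp only [mem_iInter, mem_empty_iff_false, iff_false]
      intro hx
      have hxS : x ∈ S := (hx 0).1
      have hpos' : 0 < EMetric.infEdist x Sᶜ := by
        refine EMetric.infEdist_pos_iff_notMem_closure.mpr ?_
        rw [hSopen.isClosed_compl.closure_eq]
        simpa using hxS
      have hle : ∀ n : ℕ, EMetric.infEdist x Sᶜ ≤ ENNReal.ofReal (c n) := by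
        intro n
        by_contra h
        push_neg at h
        exact (hx n).2 (le_of_lt h)
      have : EMetric.infEdist x Sᶜ ≤ 0 := by
        have htend0 : Tendsto (fun n : ℕ => ENNReal.ofReal (c n)) atTop (𝓝 0) := by
          simpa [Function.comp_def] using (ENNReal.continuous_ofReal.tendsto 0).comp hctend
        exact ge_of_tendsto' htend0 hle
      exact absurd (le_antisymm this zero_le) hpos'.ne'
    have := tendsto_measure_iInter_atTop hset hanti ⟨0, measure_ne_top μ _⟩
    rw [hiInter] at this
    simpa [Function.comp_def] using this
  have hreal_tend :
      Tendsto (fun n : ℕ => K * (μ (S \ minusSet S (c n))).toReal) atTop (𝓝 0) := by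
    have h0 : Tendsto (fun n : ℕ => (μ (S \ minusSet S (c n))).toReal) atTop (𝓝 0) := by
      have := (ENNReal.tendsto_toReal (by simp : (0:ENNReal) ≠ ⊤)).comp hmeas_tend
      simpa [Function.comp_def] using this
    have := h0.const_mul K
    simpa using this
  -- final squeeze
  rw [Metric.tendsto_nhdsWithin_nhds]
  intro ε hε
  have hev : ∀ᶠ n : ℕ in atTop,
      K * (μ (S \ minusSet S (c n))).toReal < ε ∧ c n < δ₁ := by
    filter_upwards [hreal_tend.eventually (eventually_lt_nhds hε),
      hctend.eventually (eventually_lt_nhds hδ₁.1)] with n h1 h2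
    exact ⟨h1, h2⟩
  obtain ⟨N, hN1, hN2⟩ := hev.exists
  refine ⟨c N, hcpos N, ?_⟩
  intro δ hδ hdist
  rw [Real.dist_eq] at hdist ⊢
  rw [sub_zero] at hdist
  have hδpos : (0:ℝ) < δ := hδ
  have hδlt : δ < c N := lt_of_abs_lt hdist
  have hlo : lambdaSup μ g S ≤ lambdaSup μ g (minusSet S δ) := hlow δ hδpos
  have hhi : lambdaSup μ g (minusSet S δ) ≤ lambdaSup μ g (minusSet S (c N)) :=
    hmono _ _ (hminus_anti _ _ hδlt.le)
  have hkey : lambdaSup μ g (minusSet S (c N)) ≤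
      lambdaSup μ g S + K * (μ (S \ minusSet S (c N))).toReal :=
    key (c N) ⟨hcpos N, hN2.le⟩
  show |lambdaSup μ g (minusSet S δ) - lambdaSup μ g S| < ε
  rw [abs_lt]
  constructor <;> linarith
end

section
/- Let μ be a finite Borel measure on Γ, g bounded measurable with 0 < g < 1, and u₀ : Γ → [0,∞) with μ({u₀ > 0}) > 0. Set λ₀ := ⨍_{{u₀>0}} g dμ and Λ := sup { ⨍_A g dμ : {u₀ > 0} ⊆ A }. If μ({u₀ = 0} ∩ {g > λ₀}) > 0, then Λ > λ₀, and the maximizing set A* := {u₀ > 0} ∪ {g ≥ Λ} satisfies μ(A* \ {u₀ > 0}) > 0. -/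
open Set MeasureTheory

/-- If the first nondegeneracy condition is violated then `Λ > λ₀` and the
maximizing set `A* = {u₀ > 0} ∪ {g ≥ Λ}` strictly enlarges `{u₀ > 0}`. -/
theorem lambdaSup_jump {Γ : Type*} [MeasurableSpace Γ]
    (μ : MeasureTheory.Measure Γ) [IsFiniteMeasure μ]
    (g : Γ → ℝ) (hgmeas : Measurable g) (hg0 : ∀ x, 0 < g x) (hg1 : ∀ x, g x < 1)
    (u₀ : Γ → ℝ) (hu₀meas : Measurable u₀) (hu₀nonneg : ∀ x, 0 ≤ u₀ x)
    (hμpos : 0 < μ {x | 0 < u₀ x})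
    (hviol : 0 < μ ({x | u₀ x = 0} ∩ {x | (⨍ y in {y | 0 < u₀ y}, g y ∂μ) < g x})) :
    (⨍ y in {y | 0 < u₀ y}, g y ∂μ) < lambdaSup μ g {x | 0 < u₀ x} ∧
    0 < μ (({x | 0 < u₀ x} ∪ {x | lambdaSup μ g {x | 0 < u₀ x} ≤ g x})
            \ {x | 0 < u₀ x}) := by
  set S : Set Γ := {x | 0 < u₀ x} with hS
  have hSmeas : MeasurableSet S := measurableSet_lt measurable_const hu₀meas
  set lam : ℝ := ⨍ y in S, g y ∂μ with hlam
  -- integrability of g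
  have hgint : Integrable g μ := by
    refine (integrable_const (1 : ℝ)).mono' hgmeas.aestronglyMeasurable ?_
    filter_upwards with x
    rw [Real.norm_eq_abs, abs_of_pos (hg0 x)]
    exact (hg1 x).le
  have hμfin : ∀ B : Set Γ, μ B ≠ ⊤ := fun B => (measure_lt_top μ B).ne
  -- every element of the sup set is ≤ 1
  have havg_le_one : ∀ B : Set Γ, (⨍ x in B, g x ∂μ) ≤ 1 := by
    intro B
    rw [setAverage_eq, measureReal_def]
    rcases eq_or_ne (μ B) 0 with h0 | h0
    · simp [h0]
    · have hBpos : 0 < (μ B).toReal := ENNReal.toReal_pos h0 (hμfin B)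
      have hint : (∫ x in B, g x ∂μ) ≤ (μ B).toReal := by
        calc (∫ x in B, g x ∂μ) ≤ ∫ x in B, (1 : ℝ) ∂μ :=
              integral_mono hgint.integrableOn (integrable_const 1) fun x => (hg1 x).le
          _ = (μ B).toReal := by simp [measureReal_def]
      rw [smul_eq_mul]
      calc (μ B).toReal⁻¹ * ∫ x in B, g x ∂μ ≤ (μ B).toReal⁻¹ * (μ B).toReal :=
            mul_le_mul_of_nonneg_left hint (inv_nonneg.2 hBpos.le)
        _ = 1 := inv_mul_cancel₀ hBpos.ne'
  have hbdd : BddAbove {r : ℝ | ∃ A : Set Γ, MeasurableSet A ∧ S ⊆ A ∧ r = ⨍ x in A, g x ∂μ} := by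
    refine ⟨1, ?_⟩
    rintro r ⟨A, _, _, rfl⟩
    exact havg_le_one A
  have hnonempty : lam ∈ {r : ℝ | ∃ A : Set Γ, MeasurableSet A ∧ S ⊆ A ∧ r = ⨍ x in A, g x ∂μ} :=
    ⟨S, hSmeas, subset_rfl, rfl⟩
  -- the test set T
  set T : Set Γ := {x | u₀ x = 0} ∩ {x | lam < g x} with hT
  have hTmeas : MeasurableSet T :=
    (hu₀meas (measurableSet_singleton 0)).inter (measurableSet_lt measurable_const hgmeas)
  have hTpos : 0 < μ T := hviol
  have hST : Disjoint S T := by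
    rw [Set.disjoint_left]
    rintro x hx ⟨hx0, -⟩
    exact absurd hx0 (ne_of_gt hx)
  have hSpos : 0 < (μ S).toReal := ENNReal.toReal_pos hμpos.ne' (hμfin S)
  -- integral over S equals lam * μ S
  have hIS : (∫ x in S, g x ∂μ) = lam * (μ S).toReal := by
    rw [hlam, setAverage_eq, smul_eq_mul, measureReal_def]
    field_simp
  -- integral over T is strictly bigger than lam * μ T
  have hIT : lam * (μ T).toReal < ∫ x in T, g x ∂μ := by
    have hpos : 0 < ∫ x in T, (g x - lam) ∂μ := by
      rw [setIntegral_pos_iff_support_of_nonneg_ae]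
      · refine lt_of_lt_of_le hTpos (measure_mono ?_)
        intro x hx
        exact ⟨ne_of_gt (sub_pos.2 hx.2), hx⟩
      · refine (ae_restrict_iff' hTmeas).2 ?_
        filter_upwards with x hx
        exact (sub_pos.2 hx.2).le
      · exact (hgint.integrableOn.sub (integrable_const lam))
    have := integral_sub (μ := μ.restrict T) hgint.integrableOn (integrable_const lam)
    rw [this] at hpos
    simp only [integral_const, smul_eq_mul, measureReal_def, Measure.restrict_apply_univ] at hpos
    linarith
  -- average over A := S ∪ T is > lam
  have hA1 : lam < ⨍ x in S ∪ T, g x ∂μ := by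
    have hμA : μ (S ∪ T) = μ S + μ T := measure_union hST hTmeas
    have hAr : (μ (S ∪ T)).toReal = (μ S).toReal + (μ T).toReal := by
      rw [hμA, ENNReal.toReal_add (hμfin S) (hμfin T)]
    have hApos : 0 < (μ (S ∪ T)).toReal := by
      have : 0 ≤ (μ T).toReal := ENNReal.toReal_nonneg
      rw [hAr]; linarith
    have hintA : (∫ x in S ∪ T, g x ∂μ) = (∫ x in S, g x ∂μ) + ∫ x in T, g x ∂μ :=
      setIntegral_union hST hTmeas hgint.integrableOn hgint.integrableOn
    rw [setAverage_eq, measureReal_def, smul_eq_mul, inv_mul_eq_div, lt_div_iff₀ hApos]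
    rw [hintA, hIS, hAr]
    nlinarith [hIT]
  have hΛge : (⨍ x in S ∪ T, g x ∂μ) ≤ lambdaSup μ g S :=
    le_csSup hbdd ⟨S ∪ T, hSmeas.union hTmeas, subset_union_left, rfl⟩
  have hmain : lam < lambdaSup μ g S := lt_of_lt_of_le hA1 hΛge
  refine ⟨hmain, ?_⟩
  -- second claim
  set Λ : ℝ := lambdaSup μ g S with hΛ
  rw [union_diff_left]
  by_contra hcon
  push_neg at hcon
  have h0 : μ ({x | Λ ≤ g x} \ S) = 0 := le_antisymm hcon (by simp)
  -- every admissible average is ≤ Λ - ε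
  set a : ℝ := (μ S).toReal with ha
  set m : ℝ := (μ (univ : Set Γ)).toReal with hm
  have hma : a ≤ m := ENNReal.toReal_mono (hμfin _) (measure_mono (subset_univ S))
  have hmpos : 0 < m := lt_of_lt_of_le hSpos hma
  set ε : ℝ := (Λ - lam) * a / m with hε
  have hεpos : 0 < ε := by
    apply div_pos (mul_pos (by linarith) hSpos) hmpos
  have hub : ∀ r ∈ {r : ℝ | ∃ A : Set Γ, MeasurableSet A ∧ S ⊆ A ∧ r = ⨍ x in A, g x ∂μ},
      r ≤ Λ - ε := by
    rintro r ⟨A, hAmeas, hSA, rfl⟩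
    set b : ℝ := (μ (A \ S)).toReal with hb
    have hbnn : 0 ≤ b := ENNReal.toReal_nonneg
    have hμA : (μ A).toReal = a + b := by
      have h1 : μ (A ∩ S) + μ (A \ S) = μ A := measure_inter_add_diff A hSmeas
      rw [inter_eq_self_of_subset_right hSA] at h1
      rw [← h1, ENNReal.toReal_add (hμfin S) (hμfin _)]
    have habm : a + b ≤ m := by
      rw [← hμA]
      exact ENNReal.toReal_mono (hμfin _) (measure_mono (subset_univ A))
    have hApos : 0 < (μ A).toReal := by rw [hμA]; linarith
    -- g ≤ Λ a.e. on A \ S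
    have hae : g ≤ᵐ[μ.restrict (A \ S)] fun _ => Λ := by
      refine (ae_restrict_iff' (hAmeas.diff hSmeas)).2 ?_
      have hnm : ∀ᵐ x ∂μ, x ∉ {x | Λ ≤ g x} \ S := by
        rw [← measure_eq_zero_iff_ae_notMem]; exact h0
      filter_upwards [hnm] with x hx hxA
      by_contra hgx
      push_neg at hgx
      exact hx ⟨hgx.le, hxA.2⟩
    have hIb : (∫ x in A \ S, g x ∂μ) ≤ Λ * b := by
      calc (∫ x in A \ S, g x ∂μ) ≤ ∫ _ in A \ S, Λ ∂μ :=
            integral_mono_ae hgint.integrableOn (integrable_const Λ) hae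
        _ = Λ * b := by simp [hb, mul_comm, measureReal_def]
    have hintA : (∫ x in A, g x ∂μ) = (∫ x in S, g x ∂μ) + ∫ x in A \ S, g x ∂μ := by
      have h2 := setIntegral_union (f := g) disjoint_sdiff_right (hAmeas.diff hSmeas)
        hgint.integrableOn hgint.integrableOn
      rwa [union_diff_cancel hSA] at h2
    rw [setAverage_eq, measureReal_def, smul_eq_mul, hμA]
    have hI : (∫ x in A, g x ∂μ) ≤ lam * a + Λ * b := by
      rw [hintA, hIS]; linarith
    have habpos : (0:ℝ) < a + b := by linarith
    have key : (a + b)⁻¹ * (lam * a + Λ * b) ≤ Λ - ε := by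
      have h1 : (a + b)⁻¹ * (lam * a + Λ * b) = Λ - (Λ - lam) * a / (a + b) := by
        field_simp
        ring
      have h2 : (Λ - lam) * a / m ≤ (Λ - lam) * a / (a + b) := by
        gcongr
      rw [h1, hε]
      linarith
    calc (a + b)⁻¹ * ∫ x in A, g x ∂μ ≤ (a + b)⁻¹ * (lam * a + Λ * b) :=
          mul_le_mul_of_nonneg_left hI (inv_nonneg.2 (by linarith))
      _ ≤ Λ - ε := key
  have : Λ ≤ Λ - ε := csSup_le ⟨lam, hnonempty⟩ hub
  linarith
end
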